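/- Fix a real exponent p and a real exponent s > 0. The following are equivalent: (i) for every dimension n, every n×n complex matrix H and every positive semidefinite n×n matrix L, the function A ↦ Tr( (L + H* A^p H)^s ) is concave on the set of positive definite n×n complex matrices; (ii) for every dimension n and every n×n complex matrix H, the function A ↦ Tr( (H* A^p H)^s ) is concave on the set of positive definite n×n complex matrices. -/

import Mathlib

open Matrix ComplexOrder
open scoped MatrixOrder

/-- Functional calculus for Hermitian complex matrices: apply `f` to the eigenvalues.
(For non-Hermitian input we return `0`; all matrices considered below are Hermitian.) -/
noncomputable def mfun {n : ℕ} (f : ℝ → ℝ) (A : Matrix (Fin n) (Fin n) ℂ) :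
    Matrix (Fin n) (Fin n) ℂ :=
  if hA : A.IsHermitian then
    (hA.eigenvectorUnitary : Matrix (Fin n) (Fin n) ℂ) *
      Matrix.diagonal (fun i => (f (hA.eigenvalues i) : ℂ)) *
      (hA.eigenvectorUnitary : Matrix (Fin n) (Fin n) ℂ)ᴴ
  else 0

/-- Real matrix power `A^r` of a Hermitian matrix, via functional calculus
(`t ↦ t ^ r` is the real power, with the convention `0 ^ r = 0` for `r ≠ 0`). -/
noncomputable def mpow {n : ℕ} (A : Matrix (Fin n) (Fin n) ℂ) (r : ℝ) :
    Matrix (Fin n) (Fin n) ℂ :=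
  mfun (fun t => t ^ r) A


lemma real_diag_isHermitian {n : ℕ} (d : Fin n → ℝ) :
    (Matrix.diagonal (fun i => (d i : ℂ))).IsHermitian := by
  have h : (star fun i => ((d i : ℝ) : ℂ)) = fun i => ((d i : ℝ) : ℂ) :=
    funext fun i => Complex.conj_ofReal _
  rw [Matrix.IsHermitian, diagonal_conjTranspose, h]

lemma unitary_coe_mul_conjTranspose {n : ℕ} {A : Matrix (Fin n) (Fin n) ℂ}
    (hA : A.IsHermitian) :
    (hA.eigenvectorUnitary : Matrix (Fin n) (Fin n) ℂ) *
      (hA.eigenvectorUnitary : Matrix (Fin n) (Fin n) ℂ)ᴴ = 1 := by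
  have := (Matrix.mem_unitaryGroup_iff).mp hA.eigenvectorUnitary.2
  simpa [Matrix.star_eq_conjTranspose] using this

lemma unitary_coe_conjTranspose_mul {n : ℕ} {A : Matrix (Fin n) (Fin n) ℂ}
    (hA : A.IsHermitian) :
    (hA.eigenvectorUnitary : Matrix (Fin n) (Fin n) ℂ)ᴴ *
      (hA.eigenvectorUnitary : Matrix (Fin n) (Fin n) ℂ) = 1 := by
  have := (Matrix.mem_unitaryGroup_iff').mp hA.eigenvectorUnitary.2
  simpa [Matrix.star_eq_conjTranspose] using this

lemma spectral' {n : ℕ} {A : Matrix (Fin n) (Fin n) ℂ} (hA : A.IsHermitian) :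
    A = (hA.eigenvectorUnitary : Matrix (Fin n) (Fin n) ℂ) *
      Matrix.diagonal (fun i => ((hA.eigenvalues i : ℝ) : ℂ)) *
      (hA.eigenvectorUnitary : Matrix (Fin n) (Fin n) ℂ)ᴴ := by
  have := hA.spectral_theorem
  rw [Unitary.conjStarAlgAut_apply] at this
  exact this

/-- Uniqueness of the functional calculus: `mfun f A` can be computed from any
unitary diagonalization of `A` with real diagonal. -/
lemma mfun_spec {n : ℕ} (f : ℝ → ℝ) {A U : Matrix (Fin n) (Fin n) ℂ} {d : Fin n → ℝ}
    (hU : U * Uᴴ = 1) (hU' : Uᴴ * U = 1)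
    (hAd : A = U * Matrix.diagonal (fun i => (d i : ℂ)) * Uᴴ) :
    mfun f A = U * Matrix.diagonal (fun i => (f (d i) : ℂ)) * Uᴴ := by
  have hA : A.IsHermitian := by
    rw [hAd]
    have := Matrix.isHermitian_conjTranspose_mul_mul Uᴴ (real_diag_isHermitian d)
    simpa using this
  have hV : (hA.eigenvectorUnitary : Matrix (Fin n) (Fin n) ℂ) *
      (hA.eigenvectorUnitary : Matrix (Fin n) (Fin n) ℂ)ᴴ = 1 :=
    unitary_coe_mul_conjTranspose hA
  have hV' : (hA.eigenvectorUnitary : Matrix (Fin n) (Fin n) ℂ)ᴴ *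
      (hA.eigenvectorUnitary : Matrix (Fin n) (Fin n) ℂ) = 1 :=
    unitary_coe_conjTranspose_mul hA
  set V : Matrix (Fin n) (Fin n) ℂ := (hA.eigenvectorUnitary : Matrix (Fin n) (Fin n) ℂ)
  have hspec : A = V * Matrix.diagonal (fun i => ((hA.eigenvalues i : ℝ) : ℂ)) * Vᴴ :=
    spectral' hA
  have h1 : V * Matrix.diagonal (fun i => ((hA.eigenvalues i : ℝ) : ℂ)) * Vᴴ
      = U * Matrix.diagonal (fun i => (d i : ℂ)) * Uᴴ := by
    rw [← hspec, hAd]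
  have hDW : Matrix.diagonal (fun i => ((hA.eigenvalues i : ℝ) : ℂ)) * (Vᴴ * U)
      = (Vᴴ * U) * Matrix.diagonal (fun i => (d i : ℂ)) := by
    have h2 := congrArg (fun M => Vᴴ * M * U) h1
    simp only [Matrix.mul_assoc] at h2
    rw [← Matrix.mul_assoc Vᴴ V, hV'] at h2
    simp only [Matrix.one_mul] at h2
    rw [hU', Matrix.mul_one] at h2
    rw [h2, Matrix.mul_assoc]
  have hDW' : Matrix.diagonal (fun i => ((f (hA.eigenvalues i) : ℝ) : ℂ)) * (Vᴴ * U)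
      = (Vᴴ * U) * Matrix.diagonal (fun i => ((f (d i) : ℝ) : ℂ)) := by
    ext i j
    have h3 : ((hA.eigenvalues i : ℝ) : ℂ) * (Vᴴ * U) i j
        = (Vᴴ * U) i j * ((d j : ℝ) : ℂ) := by
      have := congrFun (congrFun hDW i) j
      simpa [Matrix.diagonal_mul, Matrix.mul_diagonal] using this
    rcases eq_or_ne ((Vᴴ * U) i j) 0 with h | h
    · simp [Matrix.diagonal_mul, Matrix.mul_diagonal, h]
    · have heq : ((hA.eigenvalues i : ℝ) : ℂ) = ((d j : ℝ) : ℂ) := by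
        rw [mul_comm ((Vᴴ * U) i j) _] at h3
        exact mul_right_cancel₀ h h3
      rw [Complex.ofReal_inj] at heq
      simp [Matrix.diagonal_mul, Matrix.mul_diagonal, heq, mul_comm]
  have hWW : (Vᴴ * U) * (Vᴴ * U)ᴴ = 1 := by
    rw [conjTranspose_mul, conjTranspose_conjTranspose]
    calc Vᴴ * U * (Uᴴ * V) = Vᴴ * (U * Uᴴ) * V := by simp only [Matrix.mul_assoc]
      _ = 1 := by rw [hU, Matrix.mul_one, hV']
  have hres : mfun f A
      = V * Matrix.diagonal (fun i => ((f (hA.eigenvalues i) : ℝ) : ℂ)) * Vᴴ := by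
    rw [mfun, dif_pos hA]
  have hUeq : U = V * (Vᴴ * U) := by
    rw [← Matrix.mul_assoc, hV, Matrix.one_mul]
  rw [hres]
  conv_rhs => rw [hUeq]
  rw [conjTranspose_mul]
  have h4 := congrArg (fun M => V * M * ((Vᴴ * U)ᴴ * Vᴴ)) hDW'
  calc V * Matrix.diagonal (fun i => ((f (hA.eigenvalues i) : ℝ) : ℂ)) * Vᴴ
      = V * Matrix.diagonal (fun i => ((f (hA.eigenvalues i) : ℝ) : ℂ))
          * ((Vᴴ * U) * ((Vᴴ * U)ᴴ * Vᴴ)) := by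
        rw [← Matrix.mul_assoc (Vᴴ * U), hWW, Matrix.one_mul]
    _ = V * ((Vᴴ * U) * Matrix.diagonal (fun i => ((f (d i) : ℝ) : ℂ))) * ((Vᴴ * U)ᴴ * Vᴴ) := by
        simp only [Matrix.mul_assoc] at h4 ⊢
        exact h4
    _ = V * (Vᴴ * U) * Matrix.diagonal (fun i => ((f (d i) : ℝ) : ℂ)) * ((Vᴴ * U)ᴴ * Vᴴ) := by
        simp only [Matrix.mul_assoc]

lemma mfun_isHermitian {n : ℕ} (f : ℝ → ℝ) (A : Matrix (Fin n) (Fin n) ℂ) :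
    (mfun f A).IsHermitian := by
  rw [mfun]
  split
  · rename_i hA
    have := Matrix.isHermitian_conjTranspose_mul_mul
      (hA.eigenvectorUnitary : Matrix (Fin n) (Fin n) ℂ)ᴴ
      (real_diag_isHermitian (fun i => f (hA.eigenvalues i)))
    simpa using this
  · exact Matrix.isHermitian_zero

lemma mfun_one {n : ℕ} {f : ℝ → ℝ} (hf : f 1 = 1) :
    mfun f (1 : Matrix (Fin n) (Fin n) ℂ) = 1 := by
  have hd : (1 : Matrix (Fin n) (Fin n) ℂ)
      = 1 * Matrix.diagonal (fun _ : Fin n => ((1 : ℝ) : ℂ)) * (1 : Matrix (Fin n) (Fin n) ℂ)ᴴ := by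
    simp
  rw [mfun_spec f (by simp) (by simp) hd]
  simp [hf]

lemma mfun_zero {n : ℕ} {f : ℝ → ℝ} (hf : f 0 = 0) :
    mfun f (0 : Matrix (Fin n) (Fin n) ℂ) = 0 := by
  have hd : (0 : Matrix (Fin n) (Fin n) ℂ)
      = 1 * Matrix.diagonal (fun _ : Fin n => ((0 : ℝ) : ℂ)) * (1 : Matrix (Fin n) (Fin n) ℂ)ᴴ := by
    simp
  rw [mfun_spec f (by simp) (by simp) hd]
  simp [hf]

/-- Functional calculus of a (reindexed) block-diagonal Hermitian matrix is computed
blockwise. -/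
lemma mfun_fromBlocks {n : ℕ} (f : ℝ → ℝ) {X Y : Matrix (Fin n) (Fin n) ℂ}
    (hX : X.IsHermitian) (hY : Y.IsHermitian) :
    mfun f ((Matrix.fromBlocks X 0 0 Y).submatrix finSumFinEquiv.symm finSumFinEquiv.symm)
      = (Matrix.fromBlocks (mfun f X) 0 0 (mfun f Y)).submatrix
          finSumFinEquiv.symm finSumFinEquiv.symm := by
  set e : Fin (n + n) ≃ (Fin n ⊕ Fin n) := (finSumFinEquiv (m := n) (n := n)).symm with he
  set Vx := (hX.eigenvectorUnitary : Matrix (Fin n) (Fin n) ℂ) with hVxdef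
  set Vy := (hY.eigenvectorUnitary : Matrix (Fin n) (Fin n) ℂ) with hVydef
  have hVx1 : Vx * Vxᴴ = 1 := unitary_coe_mul_conjTranspose hX
  have hVx1' : Vxᴴ * Vx = 1 := unitary_coe_conjTranspose_mul hX
  have hVy1 : Vy * Vyᴴ = 1 := unitary_coe_mul_conjTranspose hY
  have hVy1' : Vyᴴ * Vy = 1 := unitary_coe_conjTranspose_mul hY
  set U : Matrix (Fin (n+n)) (Fin (n+n)) ℂ := (Matrix.fromBlocks Vx 0 0 Vy).submatrix e e
    with hUdef
  have hmul : ∀ M N : Matrix (Fin n ⊕ Fin n) (Fin n ⊕ Fin n) ℂ,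
      M.submatrix e e * N.submatrix e e = (M * N).submatrix e e :=
    fun M N => Matrix.submatrix_mul_equiv M N e e e
  have hUH : Uᴴ = (Matrix.fromBlocks Vxᴴ 0 0 Vyᴴ).submatrix e e := by
    rw [hUdef, conjTranspose_submatrix, fromBlocks_conjTranspose]
    simp
  set dd : Fin n ⊕ Fin n → ℝ := Sum.elim hX.eigenvalues hY.eigenvalues with hdd
  have hdiag : ∀ g : ℝ → ℝ, (Matrix.diagonal fun i : Fin n ⊕ Fin n => ((g (dd i) : ℝ) : ℂ))
      = Matrix.fromBlocks
          (Matrix.diagonal fun i => ((g (hX.eigenvalues i) : ℝ) : ℂ)) 0 0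
          (Matrix.diagonal fun i => ((g (hY.eigenvalues i) : ℝ) : ℂ)) := by
    intro g
    rw [Matrix.fromBlocks_diagonal]
    have hfun : (fun i : Fin n ⊕ Fin n => ((g (dd i) : ℝ) : ℂ))
        = Sum.elim (fun i => ((g (hX.eigenvalues i) : ℝ) : ℂ))
            (fun i => ((g (hY.eigenvalues i) : ℝ) : ℂ)) := by
      funext i
      cases i <;> rfl
    rw [hfun]
  have hU1 : U * Uᴴ = 1 := by
    rw [hUH, hUdef, hmul, fromBlocks_multiply]
    simp only [Matrix.mul_zero, Matrix.zero_mul, add_zero, zero_add, hVx1, hVy1]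
    rw [fromBlocks_one, Matrix.submatrix_one_equiv]
  have hU1' : Uᴴ * U = 1 := by
    rw [hUH, hUdef, hmul, fromBlocks_multiply]
    simp only [Matrix.mul_zero, Matrix.zero_mul, add_zero, zero_add, hVx1', hVy1']
    rw [fromBlocks_one, Matrix.submatrix_one_equiv]
  have hassemble : ∀ g : ℝ → ℝ,
      U * Matrix.diagonal (fun i => ((g (dd (e i)) : ℝ) : ℂ)) * Uᴴ
        = (Matrix.fromBlocks
            (Vx * Matrix.diagonal (fun i => ((g (hX.eigenvalues i) : ℝ) : ℂ)) * Vxᴴ) 0 0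
            (Vy * Matrix.diagonal (fun i => ((g (hY.eigenvalues i) : ℝ) : ℂ)) * Vyᴴ)).submatrix
              e e := by
    intro g
    have hD : (Matrix.diagonal fun i => ((g (dd (e i)) : ℝ) : ℂ))
        = (Matrix.diagonal fun j => ((g (dd j) : ℝ) : ℂ)).submatrix e e := by
      rw [Matrix.submatrix_diagonal_equiv]
      rfl
    rw [hUH, hUdef, hD, hmul, hmul, hdiag g, fromBlocks_multiply, fromBlocks_multiply]
    simp only [Matrix.mul_zero, Matrix.zero_mul, add_zero, zero_add]
  have hbig : (Matrix.fromBlocks X 0 0 Y).submatrix (⇑e) (⇑e)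
      = U * Matrix.diagonal (fun i => ((dd (e i) : ℝ) : ℂ)) * Uᴴ := by
    rw [hassemble (fun t => t)]
    rw [← spectral' hX, ← spectral' hY]
  rw [mfun_spec f hU1 hU1' hbig, hassemble f]
  rw [← mfun_spec f hVx1 hVx1' (spectral' hX), ← mfun_spec f hVy1 hVy1' (spectral' hY)]

lemma trace_submatrix_equiv' {l m : Type*} [Fintype l] [Fintype m]
    (M : Matrix m m ℂ) (e : l ≃ m) :
    (M.submatrix e e).trace = M.trace := by
  simp only [Matrix.trace, Matrix.diag, Matrix.submatrix_apply]
  exact e.sum_comp fun i => M i i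

lemma trace_fromBlocks' {l m : Type*} [Fintype l] [Fintype m]
    (A : Matrix l l ℂ) (B : Matrix l m ℂ) (C : Matrix m l ℂ) (D : Matrix m m ℂ) :
    (Matrix.fromBlocks A B C D).trace = A.trace + D.trace := by
  simp only [Matrix.trace, Matrix.diag, Fintype.sum_sum_type]
  simp [Matrix.fromBlocks]

lemma posDef_submatrix_equiv {l m : Type*} [Fintype l] [Fintype m] [DecidableEq l]
    [DecidableEq m] {M : Matrix m m ℂ} (hM : M.PosDef) (e : l ≃ m) :
    (M.submatrix e e).PosDef := by
  refine Matrix.PosDef.of_dotProduct_mulVec_pos ?_ (fun x hx => ?_)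
  · rw [Matrix.IsHermitian, conjTranspose_submatrix, hM.1.eq]
  · have hy : (fun j => x (e.symm j)) ≠ 0 := by
      intro h
      apply hx
      funext i
      have := congrFun h (e i)
      simpa using this
    have hpos := hM.dotProduct_mulVec_pos hy
    have hsub : (M.submatrix e e) *ᵥ x = fun i => (M *ᵥ fun j => x (e.symm j)) (e i) := by
      funext i
      simp only [Matrix.mulVec, dotProduct, Matrix.submatrix_apply]
      exact Fintype.sum_equiv e _ _ (fun j => by simp)
    rw [hsub]
    convert hpos using 1
    simp only [dotProduct, Pi.star_apply]
    exact Fintype.sum_equiv e _ _ (fun i => by simp)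

lemma posDef_fromBlocks_one {n : ℕ} {A : Matrix (Fin n) (Fin n) ℂ} (hA : A.PosDef) :
    (Matrix.fromBlocks A 0 0 (1 : Matrix (Fin n) (Fin n) ℂ)).PosDef := by
  refine Matrix.PosDef.of_dotProduct_mulVec_pos ?_ (fun x hx => ?_)
  · rw [Matrix.IsHermitian, fromBlocks_conjTranspose]
    simp [hA.1.eq]
  · have hx' : x = Sum.elim (x ∘ Sum.inl) (x ∘ Sum.inr) := by
      funext i; cases i <;> rfl
    rw [hx', Matrix.fromBlocks_mulVec]
    simp only [Matrix.zero_mulVec, add_zero, zero_add, Matrix.one_mulVec]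
    have hstar : star (Sum.elim (x ∘ Sum.inl) (x ∘ Sum.inr))
        = Sum.elim (star (x ∘ Sum.inl)) (star (x ∘ Sum.inr)) := by
      funext i; cases i <;> rfl
    rw [hstar, sumElim_dotProduct_sumElim]
    have h2 : (0 : ℂ) ≤ star (x ∘ Sum.inr) ⬝ᵥ (x ∘ Sum.inr) :=
      dotProduct_star_self_nonneg _
    rcases eq_or_ne (x ∘ Sum.inl) 0 with h | h
    · have h3 : x ∘ Sum.inr ≠ 0 := by
        intro h4
        apply hx
        rw [hx']
        funext i
        cases i
        · exact congrFun h _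
        · exact congrFun h4 _
      have h5 : (0 : ℂ) < star (x ∘ Sum.inr) ⬝ᵥ (x ∘ Sum.inr) :=
        dotProduct_star_self_pos_iff.mpr h3
      have h6 : (0 : ℂ) ≤ star (x ∘ Sum.inl) ⬝ᵥ (A *ᵥ (x ∘ Sum.inl)) := hA.posSemidef.dotProduct_mulVec_nonneg _
      exact add_pos_of_nonneg_of_pos h6 h5
    · exact add_pos_of_pos_of_nonneg (hA.dotProduct_mulVec_pos h) h2

lemma posDef_rsmul {n : ℕ} {M : Matrix (Fin n) (Fin n) ℂ} (hM : M.PosDef) {a : ℝ}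
    (ha : 0 < a) : (a • M).PosDef := by
  have hsm : a • M = ((a : ℂ)) • M := by
    ext i j
    simp [Complex.real_smul]
  rw [hsm]
  refine Matrix.PosDef.of_dotProduct_mulVec_pos ?_ (fun x hx => ?_)
  · rw [Matrix.IsHermitian, conjTranspose_smul]
    rw [hM.1.eq]
    congr 1
    simp [Complex.star_def, Complex.conj_ofReal]
  · have := hM.dotProduct_mulVec_pos hx
    rw [smul_mulVec, dotProduct_smul]
    calc (0:ℂ) = (a:ℂ) * 0 := by ring
    _ < (a:ℂ) * (star x ⬝ᵥ M *ᵥ x) := by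
        rw [Complex.lt_def] at this ⊢
        constructor
        · simp only [Complex.mul_re, Complex.ofReal_re, Complex.ofReal_im, Complex.mul_im]
          have h1 := this.1
          have h2 := this.2.symm
          simp at h1 h2 ⊢
          nlinarith [h1, ha]
        · simp only [Complex.mul_im, Complex.ofReal_re, Complex.ofReal_im]
          have h2 := this.2
          simp at h2 ⊢
          simp [← h2]
    _ = (a:ℂ) • (star x ⬝ᵥ M *ᵥ x) := by rw [smul_eq_mul]

lemma convex_posDef (n : ℕ) : Convex ℝ {A : Matrix (Fin n) (Fin n) ℂ | A.PosDef} := by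
  intro A hA B hB a b ha hb hab
  simp only [Set.mem_setOf_eq] at hA hB ⊢
  rcases ha.eq_or_lt with rfl | ha'
  · have hb1 : b = 1 := by linarith
    simpa [hb1] using hB
  rcases hb.eq_or_lt with rfl | hb'
  · have ha1 : a = 1 := by linarith
    simpa [ha1] using hA
  exact (posDef_rsmul hA ha').add (posDef_rsmul hB hb')

/-- The key dilation identity: the shifted trace functional in dimension `n` agrees with
the unshifted trace functional in dimension `n + n` for a suitable block matrix `H`. -/
lemma key_eq {n : ℕ} (p s : ℝ) (hs : 0 < s) (H L : Matrix (Fin n) (Fin n) ℂ)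
    (hL : L.PosSemidef) (A : Matrix (Fin n) (Fin n) ℂ) (hA : A.IsHermitian) :
    (mpow (((Matrix.fromBlocks H 0 (CFC.sqrt L) 0).submatrix
            finSumFinEquiv.symm finSumFinEquiv.symm)ᴴ *
        mpow ((Matrix.fromBlocks A 0 0 1).submatrix finSumFinEquiv.symm finSumFinEquiv.symm) p *
        (Matrix.fromBlocks H 0 (CFC.sqrt L) 0).submatrix finSumFinEquiv.symm finSumFinEquiv.symm)
        s).trace
      = (mpow (L + Hᴴ * mpow A p * H) s).trace := by
  set e : Fin (n + n) ≃ (Fin n ⊕ Fin n) := (finSumFinEquiv (m := n) (n := n)).symm with he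
  have hmul : ∀ M N : Matrix (Fin n ⊕ Fin n) (Fin n ⊕ Fin n) ℂ,
      M.submatrix e e * N.submatrix e e = (M * N).submatrix e e :=
    fun M N => Matrix.submatrix_mul_equiv M N e e e
  have hK : (CFC.sqrt L).IsHermitian := (CFC.sqrt_nonneg L).posSemidef.1
  have h1 : mpow ((Matrix.fromBlocks A 0 0 1).submatrix e e) p
      = (Matrix.fromBlocks (mpow A p) 0 0 1).submatrix e e := by
    rw [mpow, mfun_fromBlocks _ hA Matrix.isHermitian_one]
    rw [mfun_one (Real.one_rpow p)]
    rfl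
  have h2 : ((Matrix.fromBlocks H 0 (CFC.sqrt L) 0).submatrix e e)ᴴ *
        ((Matrix.fromBlocks (mpow A p) 0 0 1).submatrix e e) *
        ((Matrix.fromBlocks H 0 (CFC.sqrt L) 0).submatrix e e)
      = (Matrix.fromBlocks (L + Hᴴ * mpow A p * H) 0 0 0).submatrix e e := by
    have hinner : Matrix.fromBlocks Hᴴ (CFC.sqrt L)ᴴ ((0 : Matrix (Fin n) (Fin n) ℂ)ᴴ)
          ((0 : Matrix (Fin n) (Fin n) ℂ)ᴴ) *
        Matrix.fromBlocks (mpow A p) 0 0 (1 : Matrix (Fin n) (Fin n) ℂ) *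
        Matrix.fromBlocks H (0 : Matrix (Fin n) (Fin n) ℂ) (CFC.sqrt L) 0
        = Matrix.fromBlocks (L + Hᴴ * mpow A p * H) (0 : Matrix (Fin n) (Fin n) ℂ)
            (0 : Matrix (Fin n) (Fin n) ℂ) (0 : Matrix (Fin n) (Fin n) ℂ) := by
      rw [fromBlocks_multiply, fromBlocks_multiply, hK.eq]
      simp only [Matrix.mul_zero, Matrix.zero_mul, add_zero, zero_add, Matrix.mul_one,
        conjTranspose_zero]
      rw [CFC.sqrt_mul_sqrt_self L hL.nonneg, add_comm (Hᴴ * mpow A p * H) L]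
    rw [conjTranspose_submatrix, fromBlocks_conjTranspose, hmul, hmul, hinner]
  have hX : (L + Hᴴ * mpow A p * H).IsHermitian :=
    hL.1.add (Matrix.isHermitian_conjTranspose_mul_mul H
      (mfun_isHermitian (fun t => t ^ p) A))
  have h3 : mpow ((Matrix.fromBlocks (L + Hᴴ * mpow A p * H) 0 0 0).submatrix e e) s
      = (Matrix.fromBlocks (mpow (L + Hᴴ * mpow A p * H) s) 0 0 0).submatrix e e := by
    rw [mpow, mfun_fromBlocks _ hX Matrix.isHermitian_zero,
      mfun_zero (f := fun t => t ^ s) (Real.zero_rpow hs.ne')]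
    rfl
  rw [h1, h2, h3, trace_submatrix_equiv', trace_fromBlocks']
  simp

/-- For fixed exponents `p` and `s > 0`, the trace function
`A ↦ Tr((L + Hᴴ A^p H)^s)` is concave on positive definite matrices for every
dimension, every `H` and every positive semidefinite `L`, if and only if this holds
with `L = 0`, i.e. `A ↦ Tr((Hᴴ A^p H)^s)` is concave for every dimension and `H`. -/
theorem concave_trace_shifted_iff (p s : ℝ) (hs : 0 < s) :
    (∀ (n : ℕ) (H L : Matrix (Fin n) (Fin n) ℂ), L.PosSemidef →
        ConcaveOn ℝ {A : Matrix (Fin n) (Fin n) ℂ | A.PosDef}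
          (fun A => (mpow (L + Hᴴ * mpow A p * H) s).trace.re)) ↔
      (∀ (n : ℕ) (H : Matrix (Fin n) (Fin n) ℂ),
        ConcaveOn ℝ {A : Matrix (Fin n) (Fin n) ℂ | A.PosDef}
          (fun A => (mpow (Hᴴ * mpow A p * H) s).trace.re)) := by
  constructor
  · intro h n H
    have := h n H 0 Matrix.PosSemidef.zero
    simpa using this
  · intro h n H L hL
    have hmain := h (n + n) ((Matrix.fromBlocks H 0 (CFC.sqrt L) 0).submatrix
      finSumFinEquiv.symm finSumFinEquiv.symm)
    refine ⟨convex_posDef n, ?_⟩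
    intro A hA B hB a b ha hb hab
    simp only [Set.mem_setOf_eq] at hA hB
    have hABmem : (a • A + b • B).PosDef := convex_posDef n hA hB ha hb hab
    have hφ : ∀ M : Matrix (Fin n) (Fin n) ℂ, M.PosDef →
        ((Matrix.fromBlocks M 0 0 1).submatrix
          (finSumFinEquiv (m := n) (n := n)).symm finSumFinEquiv.symm)
          ∈ {A : Matrix (Fin (n+n)) (Fin (n+n)) ℂ | A.PosDef} :=
      fun M hM => posDef_submatrix_equiv (posDef_fromBlocks_one hM) _
    have hcomb := hmain.2 (hφ A hA) (hφ B hB) ha hb hab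
    have haff : a • (Matrix.fromBlocks A 0 0 (1 : Matrix (Fin n) (Fin n) ℂ)).submatrix
          (finSumFinEquiv (m := n) (n := n)).symm finSumFinEquiv.symm
        + b • (Matrix.fromBlocks B 0 0 (1 : Matrix (Fin n) (Fin n) ℂ)).submatrix
          (finSumFinEquiv (m := n) (n := n)).symm finSumFinEquiv.symm
        = (Matrix.fromBlocks (a • A + b • B) 0 0 (1 : Matrix (Fin n) (Fin n) ℂ)).submatrix
          (finSumFinEquiv (m := n) (n := n)).symm finSumFinEquiv.symm := by
      have h1 : a • Matrix.fromBlocks A 0 0 (1 : Matrix (Fin n) (Fin n) ℂ)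
          + b • Matrix.fromBlocks B 0 0 (1 : Matrix (Fin n) (Fin n) ℂ)
          = Matrix.fromBlocks (a • A + b • B) 0 0 1 := by
        rw [Matrix.fromBlocks_smul, Matrix.fromBlocks_smul, Matrix.fromBlocks_add]
        simp [← add_smul, hab]
      calc a • (Matrix.fromBlocks A 0 0 (1 : Matrix (Fin n) (Fin n) ℂ)).submatrix
              (finSumFinEquiv (m := n) (n := n)).symm finSumFinEquiv.symm
            + b • (Matrix.fromBlocks B 0 0 (1 : Matrix (Fin n) (Fin n) ℂ)).submatrix
              (finSumFinEquiv (m := n) (n := n)).symm finSumFinEquiv.symm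
          = (a • Matrix.fromBlocks A 0 0 (1 : Matrix (Fin n) (Fin n) ℂ)
              + b • Matrix.fromBlocks B 0 0 (1 : Matrix (Fin n) (Fin n) ℂ)).submatrix
              (finSumFinEquiv (m := n) (n := n)).symm finSumFinEquiv.symm := rfl
        _ = _ := by rw [h1]
    rw [haff] at hcomb
    have eA := congrArg Complex.re (key_eq p s hs H L hL A hA.1)
    have eB := congrArg Complex.re (key_eq p s hs H L hL B hB.1)
    have eAB := congrArg Complex.re (key_eq p s hs H L hL (a • A + b • B) hABmem.1)
    simp only at hcomb
    rw [eA, eB, eAB] at hcomb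
    simpa using hcomb
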